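/- Let S be a mixed subdivision of nΔ^{d-1}, and let A, B be types of cells of S such that A_i ∩ B_i ≠ ∅ for every i ∈ [n]. Then the componentwise intersection A ∩ B = (A_1∩B_1,...,A_n∩B_n) is also the type of a cell of S. (It suffices to prove this from: the comparability graph of any two types of cells of S is acyclic, and every refinement of a type of S is a type of S.) -/

import Mathlib

open Finset

/-- An `(n,d)`-type: an `n`-tuple of subsets of `[d]`. -/
abbrev NDType (n d : ℕ) := Fin n → Finset (Fin d)

/-- All entries nonempty. -/
def IsType {n d : ℕ} (A : NDType n d) : Prop := ∀ i, (A i).Nonempty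

/-- A directed edge `u → v` of the comparability graph `CG(A,B)`:
for some coordinate `i`, `u ∈ A i`, `v ∈ B i`, and not both lie in `A i ∩ B i`. -/
def DirEdge {n d : ℕ} (A B : NDType n d) (u v : Fin d) : Prop :=
  u ≠ v ∧ ∃ i, u ∈ A i ∧ v ∈ B i ∧ ¬ (u ∈ A i ∩ B i ∧ v ∈ A i ∩ B i)

/-- An undirected edge of `CG(A,B)`: both endpoints lie in some `A i ∩ B i`. -/
def UndirEdge {n d : ℕ} (A B : NDType n d) (u v : Fin d) : Prop :=
  u ≠ v ∧ ∃ i, u ∈ A i ∩ B i ∧ v ∈ A i ∩ B i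

/-- A step of a directed walk in `CG(A,B)`: a directed edge in the right
direction, or an undirected edge. -/
def Step {n d : ℕ} (A B : NDType n d) (u v : Fin d) : Prop :=
  DirEdge A B u v ∨ UndirEdge A B u v

/-- `CG(A,B)` contains a directed cycle: a closed walk all of whose directed
edges point in the walk direction, with at least one directed edge. -/
def HasDirectedCycle {n d : ℕ} (A B : NDType n d) : Prop :=
  ∃ (k : ℕ) (v : Fin (k + 1) → Fin d),
    v 0 = v (Fin.last k) ∧
    (∀ i : Fin k, Step A B (v i.castSucc) (v i.succ)) ∧
    (∃ i : Fin k, DirEdge A B (v i.castSucc) (v i.succ))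

/-- The comparability graph `CG(A,B)` is acyclic. -/
def Acyclic {n d : ℕ} (A B : NDType n d) : Prop := ¬ HasDirectedCycle A B

/-- An ordered partition of `[d]` into `k` (nonempty, ordered) parts. -/
def IsOrderedPartition {d k : ℕ} (P : Fin k → Finset (Fin d)) : Prop :=
  (∀ a, (P a).Nonempty) ∧ (∀ a b, a ≠ b → Disjoint (P a) (P b)) ∧
    (∀ j : Fin d, ∃ a, j ∈ P a)

/-- `B` is the refinement `A|P` of `A` with respect to the ordered partition `P`:
`B i = A i ∩ P (m i)` where `m i` is the least index with nonempty intersection. -/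
def IsRefinementBy {n d k : ℕ} (A : NDType n d) (P : Fin k → Finset (Fin d))
    (B : NDType n d) : Prop :=
  ∀ i, ∃ a, (A i ∩ P a).Nonempty ∧ (∀ b, b < a → A i ∩ P b = ∅) ∧
    B i = A i ∩ P a

/-- `B` is a refinement of `A` (with respect to some ordered partition). -/
def IsRefinement {n d : ℕ} (B A : NDType n d) : Prop :=
  ∃ (k : ℕ) (P : Fin k → Finset (Fin d)),
    IsOrderedPartition P ∧ IsRefinementBy A P B

/-- A total refinement: a refinement all of whose entries are singletons. -/
def IsTotalRefinement {n d : ℕ} (B A : NDType n d) : Prop :=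
  IsRefinement B A ∧ ∀ i, ∃ j, B i = {j}

/-- A tope: a type all of whose entries are singletons. -/
def IsTope {n d : ℕ} (A : NDType n d) : Prop := ∀ i, ∃ j, A i = {j}
open Pointwise

/-- The `j`-th standard basis vector of `ℝ^d`. -/
noncomputable def stdVec {d : ℕ} (j : Fin d) : Fin d → ℝ := Pi.single j 1

/-- The Minkowski cell `C_A = Σᵢ conv{e_j : j ∈ A i} ⊆ ℝ^d` of an `(n,d)`-type. -/
noncomputable def cell {n d : ℕ} (A : NDType n d) : Set (Fin d → ℝ) :=
  ∑ i : Fin n, convexHull ℝ (stdVec '' (A i : Set (Fin d)))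

/-- The dilated simplex `nΔ^{d-1} ⊆ ℝ^d`. -/
def dilSimplex (n d : ℕ) : Set (Fin d → ℝ) :=
  {x | (∀ j, 0 ≤ x j) ∧ ∑ j, x j = (n : ℝ)}

/-- A mixed subdivision of `nΔ^{d-1}`, encoded by the set of types of its cells:
all entries of a cell type are nonempty, the family of cells is closed under
faces (= refinements), any two cells intersect in the Minkowski sum of the
intersections of their summands, and the cells cover `nΔ^{d-1}`. -/
structure MixedSubdivision (n d : ℕ) where
  cells : Set (NDType n d)
  isType : ∀ A ∈ cells, IsType A
  refine_closed : ∀ A ∈ cells, ∀ B, IsRefinement B A → B ∈ cells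
  inter : ∀ A ∈ cells, ∀ B ∈ cells,
    cell A ∩ cell B = cell (fun i => A i ∩ B i)
  covers : ⋃ A ∈ cells, cell A = dilSimplex n d

section AuxWalk

open Relation

variable {n d : ℕ}

lemma exists_nat_walk (A B : NDType n d) {u w : Fin d}
    (h : ReflTransGen (Step A B) u w) :
    ∃ (m : ℕ) (f : ℕ → Fin d), f 0 = u ∧ f m = w ∧
      ∀ i, i < m → Step A B (f i) (f (i + 1)) := by
  induction h with
  | refl => exact ⟨0, fun _ => u, rfl, rfl, fun i hi => absurd hi (Nat.not_lt_zero i)⟩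
  | @tail b c hab hbc ih =>
      obtain ⟨m, f, h0, hm, hs⟩ := ih
      refine ⟨m + 1, fun i => if i = m + 1 then c else f i, by simp [h0], by simp, ?_⟩
      intro i hi
      rcases Nat.lt_or_ge i m with h' | h'
      · have h1 : i ≠ m + 1 := by omega
        have h2 : i + 1 ≠ m + 1 := by omega
        simpa only [if_neg h1, if_neg h2] using hs i h'
      · have him : i = m := by omega
        subst him
        have h1 : i ≠ i + 1 := by omega
        simpa only [if_neg h1, if_pos rfl, hm, ↓reduceIte] using hbc

lemma cycle_of_walk (A B : NDType n d) {u w : Fin d}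
    (hwalk : ReflTransGen (Step A B) u w) (hedge : DirEdge A B w u) :
    HasDirectedCycle A B := by
  obtain ⟨m, f, h0, hm, hs⟩ := exists_nat_walk A B hwalk
  refine ⟨m + 1, fun i => if (i : ℕ) = m + 1 then u else f (i : ℕ), ?_, ?_, ?_⟩
  · show (if ((0 : Fin (m+2)) : ℕ) = m + 1 then u else f _) =
        (if ((Fin.last (m+1) : Fin (m+2)) : ℕ) = m + 1 then u else f _)
    rw [Fin.val_zero, Fin.val_last, if_neg (by omega), if_pos rfl, h0]
  · intro i
    have hc : (i.castSucc : ℕ) = (i : ℕ) := rfl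
    have hsu : (i.succ : ℕ) = (i : ℕ) + 1 := rfl
    show Step A B (if ((i.castSucc : Fin (m+2)) : ℕ) = m + 1 then u else f _)
        (if ((i.succ : Fin (m+2)) : ℕ) = m + 1 then u else f _)
    rw [hc, hsu]
    rcases Nat.lt_or_ge (i : ℕ) m with h' | h'
    · rw [if_neg (by omega), if_neg (by omega)]
      exact hs _ h'
    · have him : (i : ℕ) = m := by omega
      rw [him, if_neg (by omega), if_pos rfl, hm]
      exact Or.inl hedge
  · refine ⟨⟨m, Nat.lt_succ_self m⟩, ?_⟩
    show DirEdge A B (if ((Fin.castSucc _ : Fin (m+2)) : ℕ) = m + 1 then u else f _)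
        (if ((Fin.succ _ : Fin (m+2)) : ℕ) = m + 1 then u else f _)
    have hc : ((Fin.castSucc ⟨m, Nat.lt_succ_self m⟩ : Fin (m+2)) : ℕ) = m := rfl
    have hsu : ((Fin.succ ⟨m, Nat.lt_succ_self m⟩ : Fin (m+2)) : ℕ) = m + 1 := rfl
    rw [hc, hsu, if_neg (by omega), if_pos rfl, hm]
    exact hedge

def walkSetoid (A B : NDType n d) : Setoid (Fin d) where
  r u v := ReflTransGen (Step A B) u v ∧ ReflTransGen (Step A B) v u
  iseqv := ⟨fun _ => ⟨.refl, .refl⟩, fun h => ⟨h.2, h.1⟩,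
    fun h1 h2 => ⟨h1.1.trans h2.1, h2.2.trans h1.2⟩⟩

def wqPO (A B : NDType n d) : PartialOrder (Quotient (walkSetoid A B)) where
  le := Quotient.lift₂ (fun u v => ReflTransGen (Step A B) v u)
    (by
      intro u1 v1 u2 v2 hu hv
      exact propext ⟨fun h => (hv.2.trans h).trans hu.1, fun h => (hv.1.trans h).trans hu.2⟩)
  lt q1 q2 := Quotient.lift₂ (fun u v => ReflTransGen (Step A B) v u)
    (by
      intro u1 v1 u2 v2 hu hv
      exact propext ⟨fun h => (hv.2.trans h).trans hu.1, fun h => (hv.1.trans h).trans hu.2⟩)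
      q1 q2 ∧ ¬ Quotient.lift₂ (fun u v => ReflTransGen (Step A B) v u)
    (by
      intro u1 v1 u2 v2 hu hv
      exact propext ⟨fun h => (hv.2.trans h).trans hu.1, fun h => (hv.1.trans h).trans hu.2⟩)
      q2 q1
  lt_iff_le_not_ge _ _ := Iff.rfl
  le_refl q := Quotient.inductionOn q fun u => ReflTransGen.refl
  le_trans q1 q2 q3 := Quotient.inductionOn₃ q1 q2 q3 fun u v w h1 h2 =>
    Relation.ReflTransGen.trans
      (show Relation.ReflTransGen (Step A B) w v from h2)
      (show Relation.ReflTransGen (Step A B) v u from h1)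
  le_antisymm q1 q2 := Quotient.inductionOn₂ q1 q2 fun u v h1 h2 => Quotient.sound
    ⟨show Relation.ReflTransGen (Step A B) u v from h2,
     show Relation.ReflTransGen (Step A B) v u from h1⟩

noncomputable instance (A B : NDType n d) : PartialOrder (Quotient (walkSetoid A B)) := wqPO A B

noncomputable instance (A B : NDType n d) :
    Fintype (LinearExtension (Quotient (walkSetoid A B))) :=
  haveI : Finite (LinearExtension (Quotient (walkSetoid A B))) :=
    Quotient.finite (walkSetoid A B)
  Fintype.ofFinite _

noncomputable def wqCard (A B : NDType n d) : ℕ :=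
  Fintype.card (LinearExtension (Quotient (walkSetoid A B)))

noncomputable def wqIso (A B : NDType n d) :
    Fin (wqCard A B) ≃o LinearExtension (Quotient (walkSetoid A B)) :=
  monoEquivOfFin _ rfl

noncomputable def wqIdx (A B : NDType n d) (j : Fin d) : Fin (wqCard A B) :=
  (wqIso A B).symm (toLinearExtension (Quotient.mk (walkSetoid A B) j))

lemma wqIdx_eq_of_r (A B : NDType n d) {u w : Fin d}
    (h : (walkSetoid A B).r u w) : wqIdx A B u = wqIdx A B w := by
  unfold wqIdx
  rw [Quotient.sound h]

lemma r_of_wqIdx_eq (A B : NDType n d) {u w : Fin d}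
    (h : wqIdx A B u = wqIdx A B w) : (walkSetoid A B).r u w := by
  have h2 : toLinearExtension (Quotient.mk (walkSetoid A B) u) =
      toLinearExtension (Quotient.mk (walkSetoid A B) w) := (wqIso A B).symm.injective h
  have h3 : Quotient.mk (walkSetoid A B) u = Quotient.mk (walkSetoid A B) w := h2
  exact Quotient.exact h3

lemma wqIdx_lt (A B : NDType n d) {u w : Fin d}
    (h1 : Relation.ReflTransGen (Step A B) w u)
    (h2 : ¬ Relation.ReflTransGen (Step A B) u w) :
    wqIdx A B u < wqIdx A B w := by
  have hle : @LE.le _ (wqPO A B).toLE (Quotient.mk (walkSetoid A B) u)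
      (Quotient.mk (walkSetoid A B) w) := h1
  have hne : Quotient.mk (walkSetoid A B) u ≠ Quotient.mk (walkSetoid A B) w := by
    intro h
    exact h2 (Quotient.exact h).1
  have hlt : toLinearExtension (Quotient.mk (walkSetoid A B) u) <
      toLinearExtension (Quotient.mk (walkSetoid A B) w) := by
    refine @lt_of_le_of_ne (LinearExtension (Quotient (walkSetoid A B))) _ _ _
      (@OrderHom.monotone _ _ (wqPO A B).toPreorder _ toLinearExtension _ _ hle) ?_
    intro h
    exact hne h
  exact (wqIso A B).symm.strictMono hlt

lemma wqIdx_surj (A B : NDType n d) (a : Fin (wqCard A B)) :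
    ∃ j : Fin d, wqIdx A B j = a := by
  obtain ⟨j, hj⟩ := Quotient.exists_rep (s := walkSetoid A B) (wqIso A B a)
  refine ⟨j, ?_⟩
  unfold wqIdx
  have : toLinearExtension (Quotient.mk (walkSetoid A B) j) = wqIso A B a := hj
  rw [this, OrderIso.symm_apply_apply]

end AuxWalk

/-- If a collection of types satisfies the comparability
property (acyclic comparability graphs) and the surrounding property (closure
under refinement), as the types of cells of a mixed subdivision of `nΔ^{d-1}`
do, then it is closed under componentwise intersections that are nonempty in
every position. -/
theorem inter_type_mem {n d : ℕ} (S : Set (NDType n d))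
    (htype : ∀ A ∈ S, IsType A)
    (hcomp : ∀ A ∈ S, ∀ B ∈ S, Acyclic A B)
    (hsurr : ∀ A ∈ S, ∀ B, IsRefinement B A → B ∈ S)
    (A B : NDType n d) (hA : A ∈ S) (hB : B ∈ S)
    (hne : ∀ i, (A i ∩ B i).Nonempty) :
    (fun i => A i ∩ B i) ∈ S := by
  classical
  have hacyc : Acyclic A B := hcomp A hA B hB
  have hcyc : ∀ {x y : Fin d}, Relation.ReflTransGen (Step A B) x y →
      DirEdge A B y x → False :=
    fun h1 h2 => hacyc (cycle_of_walk A B h1 h2)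
  -- any two elements of `A i ∩ B i` are equivalent
  have hundir : ∀ i, ∀ u ∈ A i ∩ B i, ∀ v ∈ A i ∩ B i, (walkSetoid A B).r u v := by
    intro i u hu v hv
    rcases eq_or_ne u v with rfl | hne'
    · exact (walkSetoid A B).refl u
    · exact ⟨Relation.ReflTransGen.single (Or.inr ⟨hne', i, hu, hv⟩),
        Relation.ReflTransGen.single (Or.inr ⟨hne'.symm, i, hv, hu⟩)⟩
  -- directed edges out of `A i \ B i`
  have hdir : ∀ i, ∀ w ∈ A i, w ∉ B i → ∀ u ∈ A i ∩ B i, DirEdge A B w u := by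
    intro i w hw hwB u hu
    have huB : u ∈ B i := (Finset.mem_inter.mp hu).2
    exact ⟨fun h => hwB (h ▸ huB), i, hw, huB,
      fun hcon => hwB (Finset.mem_inter.mp hcon.1).2⟩
  set idx : Fin d → Fin (wqCard A B) := wqIdx A B with hidx
  set P : Fin (wqCard A B) → Finset (Fin d) :=
    fun a => Finset.univ.filter (fun j => idx j = a) with hP
  have hmemP : ∀ (j : Fin d) (a), j ∈ P a ↔ idx j = a := by
    intro j a
    simp [hP]
  refine hsurr A hA _ ⟨wqCard A B, P, ⟨?_, ?_, ?_⟩, ?_⟩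
  · -- nonempty parts
    intro a
    obtain ⟨j, hj⟩ := wqIdx_surj A B a
    exact ⟨j, (hmemP j a).mpr hj⟩
  · -- disjoint parts
    intro a b hab
    rw [Finset.disjoint_left]
    intro j hja hjb
    exact hab (((hmemP j a).mp hja).symm.trans ((hmemP j b).mp hjb))
  · -- cover
    intro j
    exact ⟨idx j, (hmemP j _).mpr rfl⟩
  · -- refinement property
    intro i
    obtain ⟨u, hu⟩ := hne i
    have huA : u ∈ A i := (Finset.mem_inter.mp hu).1
    refine ⟨idx u, ⟨u, Finset.mem_inter.mpr ⟨huA, (hmemP u _).mpr rfl⟩⟩, ?_, ?_⟩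
    · -- earlier parts miss `A i`
      intro b hb
      by_contra hcon
      obtain ⟨w, hw⟩ := Finset.nonempty_iff_ne_empty.mpr hcon
      have hwA : w ∈ A i := (Finset.mem_inter.mp hw).1
      have hwb : idx w = b := (hmemP w b).mp (Finset.mem_inter.mp hw).2
      by_cases hwB : w ∈ B i
      · -- then `w` is in the same class as `u`
        have : idx w = idx u :=
          wqIdx_eq_of_r A B (hundir i w (Finset.mem_inter.mpr ⟨hwA, hwB⟩) u hu)
        rw [hwb] at this
        exact absurd this (ne_of_lt hb)
      · -- then there is a directed edge `w → u`, forcing `idx u < idx w`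
        have hedge : DirEdge A B w u := hdir i w hwA hwB u hu
        have h1 : Relation.ReflTransGen (Step A B) w u :=
          Relation.ReflTransGen.single (Or.inl hedge)
        have h2 : ¬ Relation.ReflTransGen (Step A B) u w :=
          fun h => hcyc h hedge
        have : idx u < idx w := wqIdx_lt A B h1 h2
        rw [hwb] at this
        omega
    · -- the selected part cuts out exactly `A i ∩ B i`
      show A i ∩ B i = A i ∩ P (idx u)
      ext w
      simp only [Finset.mem_inter]
      constructor
      · rintro ⟨hwA, hwB⟩
        refine ⟨hwA, (hmemP w _).mpr ?_⟩
        exact wqIdx_eq_of_r A B (hundir i w (Finset.mem_inter.mpr ⟨hwA, hwB⟩) u hu)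
      · rintro ⟨hwA, hwP⟩
        refine ⟨hwA, ?_⟩
        by_contra hwB
        have hedge : DirEdge A B w u := hdir i w hwA hwB u hu
        have hr : (walkSetoid A B).r w u := r_of_wqIdx_eq A B ((hmemP w _).mp hwP)
        exact hcyc hr.2 hedge
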